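/- Let n ≥ 2 be even, let m ≥ 1, and let j ∈ {0,...,n−1} with j < 2^m. Let Z_1, Z_2, ... be i.i.d. random variables, each uniform on {0, n/2}, and define X_0 = j and X_s = ⌊X_{s−1}/2⌋ + Z_s for s ≥ 1. Then P(X_m is even) ≥ 1/2. -/

import Mathlib

open Finset

/-- The probability of the event `E` under the uniform distribution on the finite
sample space `Ω`. -/
noncomputable def probOf {Ω : Type*} [Fintype Ω] (E : Ω → Prop) : ℝ :=
  (Nat.card {ω : Ω // E ω} : ℝ) / (Fintype.card Ω : ℝ)

/-- The single-card position chain of the reverse Thorp shuffle: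
`X_0 = j` and `X_{s+1} = ⌊X_s / 2⌋ + Z_{s+1}`, where the increments
`Z_1, Z_2, …` are i.i.d. uniform on `{0, n/2}`, encoded by fair coins
`b : Fin m → Bool` (with `Z_{s+1} = n/2` iff `b s = true`). -/
def thorpX (n j : ℕ) {m : ℕ} (b : Fin m → Bool) : ℕ → ℕ
  | 0 => j
  | s + 1 => thorpX n j b s / 2 + (if h : s < m then (if b ⟨s, h⟩ then n / 2 else 0) else 0)

/-- bit value of `b` at index `i`. -/
def bv {m : ℕ} (b : Fin m → Bool) (i : ℕ) : ℕ :=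
  if h : i < m then (if b ⟨i, h⟩ then 1 else 0) else 0

/-- the number encoded by the coin flips. -/
def bsum {m : ℕ} (b : Fin m → Bool) : ℕ := ∑ i ∈ Finset.range m, 2 ^ i * bv b i

lemma thorpX_formula (n j : ℕ) {m : ℕ} (b : Fin m → Bool) (heven : n % 2 = 0) :
    ∀ s, thorpX n j b s = (j + n * ∑ i ∈ Finset.range s, 2 ^ i * bv b i) / 2 ^ s := by
  have h2n : 2 ∣ n := Nat.dvd_of_mod_eq_zero heven
  intro s
  induction s with
  | zero => simp [thorpX]
  | succ s ih =>
      have hd : (if h : s < m then (if b ⟨s, h⟩ then n / 2 else 0) else 0)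
          = (n / 2) * bv b s := by
        unfold bv
        split
        · split <;> simp
        · simp
      rw [thorpX, ih, hd, Finset.sum_range_succ]
      have h1 : (j + n * ∑ i ∈ Finset.range s, 2 ^ i * bv b i) / 2 ^ s / 2
          = (j + n * ∑ i ∈ Finset.range s, 2 ^ i * bv b i) / 2 ^ (s + 1) := by
        rw [Nat.div_div_eq_div_mul, pow_succ]
      rw [h1]
      have hpos : 0 < 2 ^ (s + 1) := by positivity
      have h2 : (j + n * ∑ i ∈ Finset.range s, 2 ^ i * bv b i) / 2 ^ (s + 1) + n / 2 * bv b s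
          = ((j + n * ∑ i ∈ Finset.range s, 2 ^ i * bv b i) + (n / 2 * bv b s) * 2 ^ (s + 1))
            / 2 ^ (s + 1) := by
        rw [Nat.add_mul_div_right _ _ hpos]
      rw [h2]
      congr 1
      have : n / 2 * bv b s * 2 ^ (s + 1) = n * (2 ^ s * bv b s) := by
        rw [pow_succ]
        rw [show n / 2 * bv b s * (2 ^ s * 2) = (n / 2 * 2) * (2 ^ s * bv b s) by ring]
        rw [Nat.div_mul_cancel h2n]
      rw [this]; ring

lemma thorpX_eq_bsum (n j : ℕ) {m : ℕ} (b : Fin m → Bool) (heven : n % 2 = 0) :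
    thorpX n j b m = (j + n * bsum b) / 2 ^ m :=
  thorpX_formula n j b heven m

/-- Let `n ≥ 2` be even, `m ≥ 1`, and `j ∈ {0,…,n−1}` with `j < 2^m`.  If
`X_0 = j` and `X_s = ⌊X_{s−1}/2⌋ + Z_s` with `Z_1, Z_2, …` i.i.d. uniform on
`{0, n/2}`, then `P(X_m is even) ≥ 1/2`. -/
theorem thorpX_even_probability (n m j : ℕ) (hn2 : 2 ≤ n) (heven : n % 2 = 0)
    (hm : 1 ≤ m) (hj2m : j < 2 ^ m) (hjn : j < n) :
    (1 : ℝ) / 2 ≤ probOf (fun b : Fin m → Bool => thorpX n j b m % 2 = 0) := by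
  classical
  set E : (Fin m → Bool) → Prop := fun b => thorpX n j b m % 2 = 0 with hE
  have hcardΩ : Fintype.card (Fin m → Bool) = 2 ^ m := by simp
  set c := n / 2 with hc
  have hc2 : 2 * c = n := Nat.two_mul_div_two_of_even (Nat.even_iff.2 heven)
  have hcpos : 0 < c := by omega
  have hpow : (0:ℕ) < 2 ^ m := by positivity
  by_cases hdvd : 2 ^ m ∣ c
  · -- every outcome is even
    have hall : ∀ b : Fin m → Bool, E b := by
      intro b
      have h1 : thorpX n j b m = (j + n * bsum b) / 2 ^ m := thorpX_eq_bsum n j b heven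
      obtain ⟨t, ht⟩ := hdvd
      have hnb : n * bsum b = (2 * t * bsum b) * 2 ^ m := by
        rw [← hc2, ht]; ring
      rw [hE]
      simp only
      rw [h1, hnb, Nat.add_mul_div_right _ _ hpow, Nat.div_eq_of_lt hj2m]
      simp [Nat.mul_mod_right, mul_assoc]
    have hcard : Nat.card {b : Fin m → Bool // E b} = 2 ^ m := by
      rw [Nat.card_congr (Equiv.subtypeUnivEquiv hall)]
      simp [Nat.card_eq_fintype_card]
    rw [probOf, hcard, hcardΩ]
    rw [div_self (by positivity)]
    norm_num
  · -- involution case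
    set a := (c).factorization 2 with ha
    set q := c / 2 ^ a with hq
    have hqodd : ¬ 2 ∣ q := Nat.not_dvd_ordCompl Nat.prime_two (by omega)
    have hcq : 2 ^ a * q = c := Nat.ordProj_mul_ordCompl_eq_self c 2
    have ham : a < m := by
      by_contra h
      exact hdvd (dvd_trans (pow_dvd_pow 2 (not_lt.1 h)) ⟨q, hcq.symm⟩)
    set k : ℕ := m - 1 - a with hk
    have hkm : k < m := by omega
    have hkam : k + a + 1 = m := by omega
    have hnk : n * 2 ^ k = q * 2 ^ m := by
      rw [← hc2, ← hcq, ← hkam]; ring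
    set σ : (Fin m → Bool) → (Fin m → Bool) :=
      fun b i => if i = ⟨k, hkm⟩ then !(b i) else b i with hσ
    have hσσ : ∀ b, σ (σ b) = b := by
      intro b; funext i
      by_cases h : i = ⟨k, hkm⟩ <;> simp [hσ, h]
    have hbv_off : ∀ b i, i ≠ k → bv (σ b) i = bv b i := by
      intro b i hik
      unfold bv
      split
      · next h =>
          have : (⟨i, h⟩ : Fin m) ≠ ⟨k, hkm⟩ := by
            intro hcon; exact hik (by simpa using congrArg Fin.val hcon)
          simp [hσ, this]
      · rfl
    have hbsum : ∀ b, (b ⟨k, hkm⟩ = false → bsum (σ b) = bsum b + 2 ^ k) ∧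
        (b ⟨k, hkm⟩ = true → bsum b = bsum (σ b) + 2 ^ k) := by
      intro b
      have hmem : k ∈ Finset.range m := Finset.mem_range.2 hkm
      have hsplit : ∀ f : Fin m → Bool,
          bsum f = (∑ i ∈ (Finset.range m).erase k, 2 ^ i * bv f i) + 2 ^ k * bv f k := by
        intro f
        rw [bsum, ← Finset.sum_erase_add _ _ hmem]
      have hoff : (∑ i ∈ (Finset.range m).erase k, 2 ^ i * bv (σ b) i)
          = ∑ i ∈ (Finset.range m).erase k, 2 ^ i * bv b i := by
        apply Finset.sum_congr rfl
        intro i hi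
        rw [hbv_off b i (Finset.ne_of_mem_erase hi)]
      have hbvk : bv b k = if b ⟨k, hkm⟩ then 1 else 0 := by unfold bv; rw [dif_pos hkm]
      have hbvk' : bv (σ b) k = if (σ b) ⟨k, hkm⟩ then 1 else 0 := by
        unfold bv; rw [dif_pos hkm]
      have hσk : (σ b) ⟨k, hkm⟩ = !(b ⟨k, hkm⟩) := by simp [hσ]
      constructor
      · intro hf
        rw [hsplit (σ b), hsplit b, hoff, hbvk, hbvk', hσk, hf]
        simp
      · intro hf
        rw [hsplit (σ b), hsplit b, hoff, hbvk, hbvk', hσk, hf]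
        simp
    have hkey : ∀ b, (E (σ b) ↔ ¬ E b) := by
      intro b
      have h1 : thorpX n j b m = (j + n * bsum b) / 2 ^ m := thorpX_eq_bsum n j b heven
      have h2 : thorpX n j (σ b) m = (j + n * bsum (σ b)) / 2 ^ m :=
        thorpX_eq_bsum n j (σ b) heven
      have hstep : ∀ B : ℕ, (j + n * (B + 2 ^ k)) / 2 ^ m = (j + n * B) / 2 ^ m + q := by
        intro B
        rw [show j + n * (B + 2 ^ k) = (j + n * B) + q * 2 ^ m by rw [← hnk]; ring,
          Nat.add_mul_div_right _ _ hpow]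
      cases hbk : b ⟨k, hkm⟩ with
      | false =>
          have := (hbsum b).1 hbk
          rw [hE]; simp only
          rw [h1, h2, this, hstep]
          omega
      | true =>
          have := (hbsum b).2 hbk
          rw [hE]; simp only
          rw [h1, h2, this, hstep]
          omega
    -- build the equivalence between even and odd outcomes
    have e : {b : Fin m → Bool // E b} ≃ {b : Fin m → Bool // ¬ E b} :=
      { toFun := fun x => ⟨σ x.1, by
          have h := hkey (σ x.1)
          rw [hσσ] at h
          exact h.1 x.2⟩
        invFun := fun x => ⟨σ x.1, (hkey x.1).2 x.2⟩
        left_inv := fun x => by ext : 1; exact hσσ x.1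
        right_inv := fun x => by ext : 1; exact hσσ x.1 }
    have hcardeq : Nat.card {b : Fin m → Bool // E b} = Nat.card {b : Fin m → Bool // ¬ E b} :=
      Nat.card_congr e
    have hle : Fintype.card {b : Fin m → Bool // E b} ≤ 2 ^ m := by
      rw [← hcardΩ]; exact Fintype.card_subtype_le _
    have hsum : Nat.card {b : Fin m → Bool // E b} + Nat.card {b : Fin m → Bool // ¬ E b}
        = 2 ^ m := by
      rw [Nat.card_eq_fintype_card, Nat.card_eq_fintype_card, Fintype.card_subtype_compl,
        hcardΩ]
      omega
    have htwo : 2 * Nat.card {b : Fin m → Bool // E b} = 2 ^ m := by omega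
    have htwoR : (2 : ℝ) * (Nat.card {b : Fin m → Bool // E b} : ℝ) = 2 ^ m := by
      exact_mod_cast htwo
    rw [probOf, hcardΩ]
    have hpowR : (0:ℝ) < ((2:ℕ) ^ m : ℕ) := by positivity
    rw [le_div_iff₀ hpowR]
    push_cast at htwoR ⊢
    linarith
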